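/- If (X, y) is a minimal violating pair for a set S ⊆ {-1,0,1}^n, then every x ∈ X satisfies y ⪯ x in the outward-oriented poset; that is, for every coordinate i with y_i ≠ 0 and every x ∈ X, x_i = y_i. -/
import Mathlib


/-- The ternary hypercube `{-1,0,1}^n` as a subset of `ℝ^n`. -/
def ternarySet (n : ℕ) : Set (Fin n → ℝ) :=
  {x | ∀ i, x i = -1 ∨ x i = 0 ∨ x i = 1}

/-- If `(X, y)` is a minimal violating pair for `S ⊆ {-1,0,1}^n`, then every `x ∈ X`
satisfies `y ⪯ x` in the outward-oriented poset: for every coordinate `i` with `y i ≠ 0`,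
`x i = y i`. -/
theorem stmt_1 (n : ℕ) (S X : Set (Fin n → ℝ)) (y : Fin n → ℝ)
    (hS : S ⊆ ternarySet n) (hXS : X ⊆ S)
    (hyT : y ∈ ternarySet n) (hyS : y ∉ S)
    (hyX : y ∈ convexHull ℝ X)
    (hmin : ∀ X' ⊂ X, y ∉ convexHull ℝ X') :
    ∀ x ∈ X, ∀ i, y i ≠ 0 → x i = y i := by
  intro x hxX i hyi
  by_contra hne
  -- the candidate proper subset
  set X' : Set (Fin n → ℝ) := X ∩ {v | v i = y i} with hX'
  have hX'sub : X' ⊆ X := Set.inter_subset_left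
  have hX'ss : X' ⊂ X := ⟨hX'sub, fun h => hne ((h hxX).2)⟩
  apply hmin X' hX'ss
  -- unpack the convex combination
  rw [convexHull_eq] at hyX
  obtain ⟨ι, t, w, z, hw0, hw1, hzX, hcm⟩ := hyX
  -- every point of X has i-th coordinate in [-1,1]
  have hbd : ∀ j ∈ t, -1 ≤ z j i ∧ z j i ≤ 1 := by
    intro j hj
    rcases hS (hXS (hzX j hj)) i with h | h | h <;> rw [h] <;> norm_num
  have hsum : ∑ j ∈ t, w j * z j i = y i := by
    have := hcm
    rw [Finset.centerMass_eq_of_sum_1 _ _ hw1] at this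
    calc ∑ j ∈ t, w j * z j i = (∑ j ∈ t, w j • z j) i := by
          simp [Finset.sum_apply]
      _ = y i := by rw [this]
  -- key claim: positive-weight points have z j i = y i
  have hkey : ∀ j ∈ t, w j ≠ 0 → z j i = y i := by
    rcases hyT i with hy | hy | hy
    · -- y i = -1
      intro j hj hwj
      have hz : ∀ k ∈ t, 0 ≤ w k * (z k i + 1) := fun k hk =>
        mul_nonneg (hw0 k hk) (by linarith [(hbd k hk).1])
      have hzero : ∑ k ∈ t, w k * (z k i + 1) = 0 := by
        have : ∑ k ∈ t, w k * (z k i + 1) = (∑ k ∈ t, w k * z k i) + ∑ k ∈ t, w k := by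
          rw [← Finset.sum_add_distrib]; congr 1; ext k; ring
        rw [this, hsum, hw1, hy]; ring
      have := (Finset.sum_eq_zero_iff_of_nonneg hz).mp hzero j hj
      have hw' : 0 < w j := lt_of_le_of_ne (hw0 j hj) (Ne.symm hwj)
      have : z j i + 1 = 0 := by
        rcases mul_eq_zero.mp this with h | h
        · exact absurd h hwj
        · exact h
      rw [hy]; linarith
    · exact absurd hy hyi
    · -- y i = 1
      intro j hj hwj
      have hz : ∀ k ∈ t, 0 ≤ w k * (1 - z k i) := fun k hk =>
        mul_nonneg (hw0 k hk) (by linarith [(hbd k hk).2])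
      have hzero : ∑ k ∈ t, w k * (1 - z k i) = 0 := by
        have : ∑ k ∈ t, w k * (1 - z k i) = (∑ k ∈ t, w k) - ∑ k ∈ t, w k * z k i := by
          rw [← Finset.sum_sub_distrib]; congr 1; ext k; ring
        rw [this, hsum, hw1, hy]; ring
      have := (Finset.sum_eq_zero_iff_of_nonneg hz).mp hzero j hj
      have : 1 - z j i = 0 := by
        rcases mul_eq_zero.mp this with h | h
        · exact absurd h hwj
        · exact h
      rw [hy]; linarith
  -- y is the center of mass over the nonzero-weight part, which lies in X'
  rw [← Finset.centerMass_filter_ne_zero z] at hcm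
  rw [← hcm]
  apply Finset.centerMass_mem_convexHull
  · intro k hk; exact hw0 k (Finset.mem_filter.mp hk).1
  · rw [Finset.sum_filter_ne_zero, hw1]; norm_num
  · intro k hk
    obtain ⟨hkt, hkw⟩ := Finset.mem_filter.mp hk
    exact ⟨hzX k hkt, hkey k hkt hkw⟩
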